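/- Let g(x) = b₂ + Σ_{i=1}^H w₂ᵢ·FELU(w₁ᵢ·x + b₁ᵢ) with all w₁ᵢ ≠ 0. Then the Lipschitz constant of g equals the maximum over i ∈ {1,…,H} of |g'(-b₁ᵢ/w₁ᵢ)| and |g'(-(1+b₁ᵢ)/w₁ᵢ)|. -/

import Mathlib

noncomputable def FELU (x : ℝ) : ℝ :=
  if x > 0 then x else if -1 ≤ x then (x + 1) ^ 2 / 2 - 1 / 2 else -(1 / 2)

noncomputable def clamp01 (t : ℝ) : ℝ := max 0 (min 1 t)

lemma clamp01_of_nonpos {t : ℝ} (h : t ≤ 0) : clamp01 t = 0 :=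
  max_eq_left (le_trans (min_le_right _ _) h)

lemma clamp01_of_one_le {t : ℝ} (h : 1 ≤ t) : clamp01 t = 1 := by
  rw [clamp01, min_eq_left h]; exact max_eq_right zero_le_one

lemma clamp01_of_mem {t : ℝ} (h0 : 0 ≤ t) (h1 : t ≤ 1) : clamp01 t = t := by
  rw [clamp01, min_eq_right h1, max_eq_right h0]

lemma hasDerivAt_quad (x : ℝ) : HasDerivAt (fun y : ℝ => (y + 1) ^ 2 / 2 - 1 / 2) (x + 1) x := by
  have h := (((hasDerivAt_id x).add_const 1).pow 2).div_const 2
  have h2 := h.sub_const (1/2)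
  exact h2.congr_deriv (by simp)

lemma hasDerivAt_FELU (x : ℝ) : HasDerivAt FELU (clamp01 (x + 1)) x := by
  rcases lt_trichotomy x 0 with hx0 | hx0 | hx0
  · rcases lt_trichotomy x (-1) with hx1 | hx1 | hx1
    · -- x < -1 : constant
      rw [clamp01_of_nonpos (by linarith)]
      refine (hasDerivAt_const x (-(1/2) : ℝ)).congr_of_eventuallyEq ?_
      filter_upwards [eventually_lt_nhds hx1] with y hy
      simp [FELU, not_lt.mpr (le_of_lt (by linarith : y < 0)), not_le.mpr hy]
    · -- x = -1 : junction
      subst hx1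
      rw [clamp01_of_mem (by norm_num) (by norm_num)]
      have hleft : HasDerivWithinAt FELU ((-1:ℝ) + 1) (Set.Iic (-1)) (-1) := by
        refine ((hasDerivAt_const (-1:ℝ) (-(1/2):ℝ)).hasDerivWithinAt.congr ?_ ?_).congr_deriv (by norm_num)
        · intro y hy
          simp only [Set.mem_Iic] at hy
          rcases eq_or_lt_of_le hy with h | h
          · simp [FELU, h]
          · simp [FELU, not_lt.mpr (le_of_lt (by linarith : y < 0)), not_le.mpr h]
        · simp [FELU]
      have hright : HasDerivWithinAt FELU ((-1:ℝ) + 1) (Set.Icc (-1) 0) (-1) := by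
        refine (hasDerivAt_quad (-1)).hasDerivWithinAt.congr ?_ ?_
        · intro y hy
          obtain ⟨h1, h2⟩ := hy
          rcases eq_or_lt_of_le h2 with h | h
          · simp [FELU, h]
          · simp [FELU, not_lt.mpr (le_of_lt h), h1]
        · simp [FELU]
      have := hleft.union hright
      refine this.hasDerivAt ?_
      have : Set.Iio (0:ℝ) ∈ nhds (-1:ℝ) := Iio_mem_nhds (by norm_num)
      filter_upwards [this] with y hy
      rcases le_or_gt y (-1) with h | h
      · exact Or.inl h
      · exact Or.inr ⟨le_of_lt h, le_of_lt hy⟩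
    · -- -1 < x < 0
      rw [clamp01_of_mem (by linarith) (by linarith)]
      refine (hasDerivAt_quad x).congr_of_eventuallyEq ?_
      have h1 : Set.Ioo (-1:ℝ) 0 ∈ nhds x := Ioo_mem_nhds hx1 hx0
      filter_upwards [h1] with y hy
      simp [FELU, not_lt.mpr (le_of_lt hy.2), le_of_lt hy.1]
  · -- x = 0 : junction
    subst hx0
    rw [clamp01_of_one_le (by norm_num)]
    have hleft : HasDerivWithinAt FELU ((0:ℝ) + 1) (Set.Icc (-1) 0) 0 := by
      refine (hasDerivAt_quad 0).hasDerivWithinAt.congr ?_ ?_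
      · intro y hy
        obtain ⟨h1, h2⟩ := hy
        rcases eq_or_lt_of_le h2 with h | h
        · simp [FELU, h]
        · simp [FELU, not_lt.mpr (le_of_lt h), h1]
      · simp [FELU]
    have hright : HasDerivWithinAt FELU ((0:ℝ) + 1) (Set.Ici 0) 0 := by
      refine ((hasDerivAt_id (0:ℝ)).hasDerivWithinAt.congr ?_ ?_).congr_deriv (by norm_num)
      · intro y hy
        simp only [Set.mem_Ici] at hy
        rcases eq_or_lt_of_le hy with h | h
        · simp [FELU, ← h]
        · simp [FELU, h]
      · simp [FELU]
    have := hleft.union hright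
    refine (this.congr_deriv (by norm_num)).hasDerivAt ?_
    have : Set.Ioi (-1:ℝ) ∈ nhds (0:ℝ) := Ioi_mem_nhds (by norm_num)
    filter_upwards [this] with y hy
    rcases le_or_gt y 0 with h | h
    · exact Or.inl ⟨le_of_lt hy, h⟩
    · exact Or.inr (le_of_lt h)
  · -- x > 0
    rw [clamp01_of_one_le (by linarith)]
    refine ((hasDerivAt_id x).congr_of_eventuallyEq ?_).congr_deriv rfl
    filter_upwards [eventually_gt_nhds hx0] with y hy
    simp [FELU, hy]


lemma no_cross {w b l r : ℝ} (hw : w ≠ 0) (hlr : l < r) (h : -b / w ∉ Set.Ioo l r)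
    (h1 : min (w * l + b) (w * r + b) < 0) (h2 : 0 < max (w * l + b) (w * r + b)) :
    False := by
  apply h
  rcases hw.lt_or_gt with hw' | hw'
  · have hord : w * r + b < w * l + b := by nlinarith
    rw [min_eq_right (le_of_lt hord)] at h1
    rw [max_eq_left (le_of_lt hord)] at h2
    constructor
    · rw [lt_div_iff_of_neg hw']; nlinarith
    · rw [div_lt_iff_of_neg hw']; nlinarith
  · have hord : w * l + b < w * r + b := by nlinarith
    rw [min_eq_left (le_of_lt hord)] at h1
    rw [max_eq_right (le_of_lt hord)] at h2
    constructor
    · rw [lt_div_iff₀ hw']; nlinarith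
    · rw [div_lt_iff₀ hw']; nlinarith

lemma clamp_affine {w b l r t : ℝ} (hw : w ≠ 0) (hlr : l < r) (ht0 : 0 ≤ t) (ht1 : t ≤ 1)
    (hp : -b / w ∉ Set.Ioo l r) (hq : -(1 + b) / w ∉ Set.Ioo l r) :
    clamp01 (w * ((1 - t) * l + t * r) + b + 1)
      = (1 - t) * clamp01 (w * l + b + 1) + t * clamp01 (w * r + b + 1) := by
  set ua := w * l + b + 1 with hua
  set ub := w * r + b + 1 with hub
  have hux : w * ((1 - t) * l + t * r) + b + 1 = (1 - t) * ua + t * ub := by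
    rw [hua, hub]; ring
  rw [hux]
  have hq' : ¬ (min ua ub < 0 ∧ 0 < max ua ub) := by
    rintro ⟨c1, c2⟩
    refine no_cross hw hlr hq ?_ ?_
    · have : w * l + (1 + b) = ua := by rw [hua]; ring
      rw [this]
      have : w * r + (1 + b) = ub := by rw [hub]; ring
      rw [this]; exact c1
    · have e1 : w * l + (1 + b) = ua := by rw [hua]; ring
      have e2 : w * r + (1 + b) = ub := by rw [hub]; ring
      rw [e1, e2]; exact c2
  have hp' : ¬ (min ua ub < 1 ∧ 1 < max ua ub) := by
    rintro ⟨c1, c2⟩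
    refine no_cross hw hlr hp ?_ ?_
    · rcases min_lt_iff.mp c1 with h | h
      · exact min_lt_iff.mpr (Or.inl (by rw [hua] at h; linarith))
      · exact min_lt_iff.mpr (Or.inr (by rw [hub] at h; linarith))
    · rcases lt_max_iff.mp c2 with h | h
      · exact lt_max_iff.mpr (Or.inl (by rw [hua] at h; linarith))
      · exact lt_max_iff.mpr (Or.inr (by rw [hub] at h; linarith))
  rcases le_or_gt (max ua ub) 0 with hS | hS
  · have h1 : ua ≤ 0 := le_trans (le_max_left _ _) hS
    have h2 : ub ≤ 0 := le_trans (le_max_right _ _) hS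
    rw [clamp01_of_nonpos h1, clamp01_of_nonpos h2,
      clamp01_of_nonpos (by nlinarith : (1 - t) * ua + t * ub ≤ 0)]
    ring
  · have hs : 0 ≤ min ua ub := by
      by_contra hc
      exact hq' ⟨lt_of_not_ge hc, hS⟩
    have h1 : 0 ≤ ua := le_trans hs (min_le_left _ _)
    have h2 : 0 ≤ ub := le_trans hs (min_le_right _ _)
    rcases le_or_gt 1 (min ua ub) with hs1 | hs1
    · have h3 : 1 ≤ ua := le_trans hs1 (min_le_left _ _)
      have h4 : 1 ≤ ub := le_trans hs1 (min_le_right _ _)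
      rw [clamp01_of_one_le h3, clamp01_of_one_le h4,
        clamp01_of_one_le (by nlinarith : (1:ℝ) ≤ (1 - t) * ua + t * ub)]
      ring
    · have hS1 : max ua ub ≤ 1 := by
        by_contra hc
        exact hp' ⟨hs1, lt_of_not_ge hc⟩
      have h3 : ua ≤ 1 := le_trans (le_max_left _ _) hS1
      have h4 : ub ≤ 1 := le_trans (le_max_right _ _) hS1
      rw [clamp01_of_mem h1 h3, clamp01_of_mem h2 h4,
        clamp01_of_mem (by nlinarith) (by nlinarith)]

lemma clamp_const_le {w b x y : ℝ} (hw : w ≠ 0)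
    (hx1 : x ≤ -b / w) (hx2 : x ≤ -(1 + b) / w)
    (hy1 : y ≤ -b / w) (hy2 : y ≤ -(1 + b) / w) :
    clamp01 (w * x + b + 1) = clamp01 (w * y + b + 1) := by
  rcases hw.lt_or_gt with hw' | hw'
  · have e : ∀ z : ℝ, z ≤ -b / w → 1 ≤ w * z + b + 1 := by
      intro z hz
      rw [le_div_iff_of_neg hw'] at hz
      nlinarith
    rw [clamp01_of_one_le (e x hx1), clamp01_of_one_le (e y hy1)]
  · have e : ∀ z : ℝ, z ≤ -(1 + b) / w → w * z + b + 1 ≤ 0 := by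
      intro z hz
      rw [le_div_iff₀ hw'] at hz
      nlinarith
    rw [clamp01_of_nonpos (e x hx2), clamp01_of_nonpos (e y hy2)]

lemma clamp_const_ge {w b x y : ℝ} (hw : w ≠ 0)
    (hx1 : -b / w ≤ x) (hx2 : -(1 + b) / w ≤ x)
    (hy1 : -b / w ≤ y) (hy2 : -(1 + b) / w ≤ y) :
    clamp01 (w * x + b + 1) = clamp01 (w * y + b + 1) := by
  rcases hw.lt_or_gt with hw' | hw'
  · have e : ∀ z : ℝ, -(1 + b) / w ≤ z → w * z + b + 1 ≤ 0 := by
      intro z hz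
      rw [div_le_iff_of_neg hw'] at hz
      nlinarith
    rw [clamp01_of_nonpos (e x hx2), clamp01_of_nonpos (e y hy2)]
  · have e : ∀ z : ℝ, -b / w ≤ z → 1 ≤ w * z + b + 1 := by
      intro z hz
      rw [div_le_iff₀ hw'] at hz
      nlinarith
    rw [clamp01_of_one_le (e x hx1), clamp01_of_one_le (e y hy1)]

theorem felu_network_lipschitz_constant (H : ℕ) (w₁ w₂ b₁ : Fin H → ℝ) (b₂ : ℝ)
    (hw : ∀ i, w₁ i ≠ 0)
    (g : ℝ → ℝ) (hg : g = fun x => b₂ + ∑ i, w₂ i * FELU (w₁ i * x + b₁ i)) :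
    IsLeast {L : ℝ | 0 ≤ L ∧ ∀ x y : ℝ, |g x - g y| ≤ L * |x - y|}
      (⨆ i : Fin H, max |deriv g (-b₁ i / w₁ i)| |deriv g (-(1 + b₁ i) / w₁ i)|) := by
  set D : ℝ → ℝ := fun x => ∑ i, w₂ i * (w₁ i * clamp01 (w₁ i * x + b₁ i + 1)) with hD_def
  have hD : ∀ x, HasDerivAt g (D x) x := by
    intro x
    rw [hg]
    refine HasDerivAt.const_add b₂ (HasDerivAt.fun_sum fun i _ => ?_)
    have inner : HasDerivAt (fun x : ℝ => w₁ i * x + b₁ i) (w₁ i) x := by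
      simpa using ((hasDerivAt_id x).const_mul (w₁ i)).add_const (b₁ i)
    have h1 := (hasDerivAt_FELU (w₁ i * x + b₁ i)).comp x inner
    have h2 := h1.const_mul (w₂ i)
    exact h2.congr_deriv (by ring)
  have hderiv : ∀ x, deriv g x = D x := fun x => (hD x).deriv
  -- the target constant
  have hMeq : (⨆ i : Fin H, max |deriv g (-b₁ i / w₁ i)| |deriv g (-(1 + b₁ i) / w₁ i)|)
      = ⨆ i : Fin H, max |D (-b₁ i / w₁ i)| |D (-(1 + b₁ i) / w₁ i)| := by
    exact iSup_congr fun i => by rw [hderiv, hderiv]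
  rw [hMeq]
  set M := ⨆ i : Fin H, max |D (-b₁ i / w₁ i)| |D (-(1 + b₁ i) / w₁ i)| with hM_def
  -- lower-bound tool : any Lipschitz constant dominates |D c|
  have hslope : ∀ L : ℝ, (∀ x y : ℝ, |g x - g y| ≤ L * |x - y|) → ∀ c : ℝ, |D c| ≤ L := by
    intro L hLip c
    have hts : Filter.Tendsto (fun y => |slope g c y|) (nhdsWithin c {c}ᶜ) (nhds |D c|) :=
      (hasDerivAt_iff_tendsto_slope.mp (hD c)).abs
    refine le_of_tendsto hts ?_
    refine Filter.eventually_of_mem self_mem_nhdsWithin fun y hy => ?_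
    have hyc : y ≠ c := hy
    rw [slope_def_field, div_eq_mul_inv, ← div_eq_mul_inv, abs_div,
      div_le_iff₀ (abs_pos.mpr (sub_ne_zero.mpr hyc))]
    exact hLip y c
  rcases Nat.eq_zero_or_pos H with hH | hH
  · subst hH
    have hM0 : M = 0 := by
      rw [hM_def, Real.iSup_of_isEmpty]
    rw [hM0]
    constructor
    · refine ⟨le_refl 0, fun x y => ?_⟩
      rw [hg]
      simp
    · exact fun L hL => hL.1
  · have : Nonempty (Fin H) := ⟨⟨0, hH⟩⟩
    obtain ⟨i0⟩ := this
    have bdd : BddAbove (Set.range fun i : Fin H =>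
        max |D (-b₁ i / w₁ i)| |D (-(1 + b₁ i) / w₁ i)|) := (Set.finite_range _).bddAbove
    have hMi : ∀ i, max |D (-b₁ i / w₁ i)| |D (-(1 + b₁ i) / w₁ i)| ≤ M :=
      fun i => le_ciSup bdd i
    have hM0 : 0 ≤ M :=
      le_trans (le_trans (abs_nonneg _) (le_max_left _ _)) (hMi i0)
    set P : Fin H → ℝ := fun i => -b₁ i / w₁ i with hP_def
    set Q : Fin H → ℝ := fun i => -(1 + b₁ i) / w₁ i with hQ_def
    set pts : Finset ℝ := Finset.image P Finset.univ ∪ Finset.image Q Finset.univ with hpts_def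
    have hPmem : ∀ i, P i ∈ pts := fun i =>
      Finset.mem_union_left _ (Finset.mem_image_of_mem P (Finset.mem_univ i))
    have hQmem : ∀ i, Q i ∈ pts := fun i =>
      Finset.mem_union_right _ (Finset.mem_image_of_mem Q (Finset.mem_univ i))
    have hne : pts.Nonempty := ⟨P i0, hPmem i0⟩
    have hpts_bound : ∀ c ∈ pts, |D c| ≤ M := by
      intro c hc
      rcases Finset.mem_union.mp hc with h | h
      · obtain ⟨i, _, rfl⟩ := Finset.mem_image.mp h
        exact le_trans (le_max_left _ _) (hMi i)
      · obtain ⟨i, _, rfl⟩ := Finset.mem_image.mp h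
        exact le_trans (le_max_right _ _) (hMi i)
    -- key bound : |D x| ≤ M for all x
    have key : ∀ x : ℝ, |D x| ≤ M := by
      intro x
      by_cases hxp : x ∈ pts
      · exact hpts_bound x hxp
      set a := pts.min' hne with ha_def
      set bb := pts.max' hne with hbb_def
      rcases le_or_gt x a with hxa | hxa
      · have hDe : D x = D a := by
          refine Finset.sum_congr rfl fun i _ => ?_
          congr 2
          exact clamp_const_le (hw i)
            (le_trans hxa (pts.min'_le _ (hPmem i)))
            (le_trans hxa (pts.min'_le _ (hQmem i)))
            (pts.min'_le _ (hPmem i)) (pts.min'_le _ (hQmem i))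
        rw [hDe]
        exact hpts_bound a (pts.min'_mem hne)
      rcases le_or_gt bb x with hbx | hbx
      · have hDe : D x = D bb := by
          refine Finset.sum_congr rfl fun i _ => ?_
          congr 2
          exact clamp_const_ge (hw i)
            (le_trans (pts.le_max' _ (hPmem i)) hbx)
            (le_trans (pts.le_max' _ (hQmem i)) hbx)
            (pts.le_max' _ (hPmem i)) (pts.le_max' _ (hQmem i))
        rw [hDe]
        exact hpts_bound bb (pts.max'_mem hne)
      · set F1 := pts.filter (fun c => c ≤ x) with hF1_def
        set F2 := pts.filter (fun c => x ≤ c) with hF2_def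
        have h1ne : F1.Nonempty :=
          ⟨a, Finset.mem_filter.mpr ⟨pts.min'_mem hne, le_of_lt hxa⟩⟩
        have h2ne : F2.Nonempty :=
          ⟨bb, Finset.mem_filter.mpr ⟨pts.max'_mem hne, le_of_lt hbx⟩⟩
        set l := F1.max' h1ne with hl_def
        set r := F2.min' h2ne with hr_def
        have hl_pts : l ∈ pts := (Finset.mem_filter.mp (F1.max'_mem h1ne)).1
        have hr_pts : r ∈ pts := (Finset.mem_filter.mp (F2.min'_mem h2ne)).1
        have hlx : l ≤ x := (Finset.mem_filter.mp (F1.max'_mem h1ne)).2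
        have hxr : x ≤ r := (Finset.mem_filter.mp (F2.min'_mem h2ne)).2
        have hlx' : l < x := lt_of_le_of_ne hlx (fun h => hxp (h ▸ hl_pts))
        have hxr' : x < r := lt_of_le_of_ne hxr (fun h => hxp (h ▸ hr_pts))
        have hlr : l < r := lt_trans hlx' hxr'
        have hno : ∀ c ∈ pts, c ∉ Set.Ioo l r := by
          rintro c hc ⟨hc1, hc2⟩
          rcases le_total c x with h | h
          · have := F1.le_max' c (Finset.mem_filter.mpr ⟨hc, h⟩)
            rw [← hl_def] at this
            linarith
          · have := F2.min'_le c (Finset.mem_filter.mpr ⟨hc, h⟩)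
            rw [← hr_def] at this
            linarith
        set t := (x - l) / (r - l) with ht_def
        have hrl : (0:ℝ) < r - l := by linarith
        have ht0 : 0 ≤ t := div_nonneg (by linarith) (le_of_lt hrl)
        have ht1 : t ≤ 1 := by rw [ht_def, div_le_one hrl]; linarith
        have hx_comb : x = (1 - t) * l + t * r := by
          rw [ht_def]
          field_simp
          ring
        have hDx : D x = (1 - t) * D l + t * D r := by
          rw [hx_comb, hD_def]
          simp only
          rw [Finset.mul_sum, Finset.mul_sum, ← Finset.sum_add_distrib]
          refine Finset.sum_congr rfl fun i _ => ?_
          rw [clamp_affine (hw i) hlr ht0 ht1 (hno (P i) (hPmem i)) (hno (Q i) (hQmem i))]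
          ring
        rw [hDx]
        calc |(1 - t) * D l + t * D r| ≤ (1 - t) * |D l| + t * |D r| := by
              refine le_trans (abs_add_le _ _) ?_
              rw [abs_mul, abs_mul, abs_of_nonneg (by linarith : (0:ℝ) ≤ 1 - t),
                abs_of_nonneg ht0]
          _ ≤ (1 - t) * M + t * M := by
              exact add_le_add
                (mul_le_mul_of_nonneg_left (hpts_bound l hl_pts) (by linarith))
                (mul_le_mul_of_nonneg_left (hpts_bound r hr_pts) ht0)
          _ = M := by ring
    constructor
    · refine ⟨hM0, fun x y => ?_⟩
      have := Convex.norm_image_sub_le_of_norm_hasDerivWithin_le (f := g) (f' := D)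
        (s := Set.univ) (fun z _ => (hD z).hasDerivWithinAt)
        (fun z _ => by rw [Real.norm_eq_abs]; exact key z)
        convex_univ (Set.mem_univ y) (Set.mem_univ x)
      simpa [Real.norm_eq_abs] using this
    · rintro L ⟨hL0, hLip⟩
      haveI : Nonempty (Fin H) := ⟨⟨0, hH⟩⟩
      exact ciSup_le fun i => max_le (hslope L hLip _) (hslope L hLip _)
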